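/- arXiv:1508.04706 — 2 statements merged into one kernel-verified Lean document; each statement's English description precedes it below -/
import Mathlib

section
/- A mode θ associated with a quasi-eigenvalue ω with Re ω > 0 has at most one zero in [a₁,a₂], and any zero lies in the turning interval [x₊, x⁺]. -/
open MeasureTheory Set intervalIntegral

lemma primHasDeriv {a b y : ℝ} {U : ℝ → ℂ} (hUc : ContinuousOn U (Icc a b))
    (hy : y ∈ Ico a b) :
    HasDerivWithinAt (fun x => ∫ t in a..x, U t) (U y) (Ici y) y := by
  have hmem : Icc a b ∈ nhdsWithin y (Ioi y) := by
    apply mem_nhdsWithin.2 ⟨Iio b, isOpen_Iio, hy.2, ?_⟩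
    rintro t ⟨ht1, ht2⟩
    exact ⟨hy.1.trans (le_of_lt ht2), le_of_lt ht1⟩
  have hyI : y ∈ Icc a b := ⟨hy.1, hy.2.le⟩
  have hint : IntervalIntegrable U volume a y := by
    have : IntegrableOn U (Icc a y) := (hUc.mono (Icc_subset_Icc_right hy.2.le)).integrableOn_Icc
    exact (intervalIntegrable_iff_integrableOn_Icc_of_le hy.1).2 this
  exact integral_hasDerivWithinAt_right hint
    ⟨Icc a b, hmem, (hUc.aestronglyMeasurable measurableSet_Icc)⟩
    ((hUc y hyI).mono_of_mem_nhdsWithin hmem)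

lemma subII {E : Type*} [NormedAddCommGroup E] {f : ℝ → E} {a b : ℝ}
    (hf : IntegrableOn f (Icc a b)) {x y : ℝ} (hx : x ∈ Icc a b) (hy : y ∈ Icc a b) :
    IntervalIntegrable f volume x y :=
  (hf.mono_set (by
    rw [Set.uIcc]
    exact Icc_subset_Icc (le_min hx.1 hy.1) (max_le hx.2 hy.2))).intervalIntegrable

lemma ibp {a b : ℝ} (hab : a ≤ b) (u U v φ : ℝ → ℂ)
    (hUc : ContinuousOn U (Icc a b)) (hvc : ContinuousOn v (Icc a b))
    (hφi : IntegrableOn φ (Icc a b))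
    (hu : ∀ x ∈ Icc a b, u x = u a + ∫ t in a..x, U t)
    (hv : ∀ x ∈ Icc a b, v x = v a + ∫ t in a..x, φ t) :
    u b * v b - u a * v a = ∫ t in a..b, (U t * v t + u t * φ t) := by
  have haI : a ∈ Icc a b := ⟨le_rfl, hab⟩
  have hbI : b ∈ Icc a b := ⟨hab, le_rfl⟩
  have hUi : IntegrableOn U (Icc a b) := hUc.integrableOn_Icc
  have hUiu : IntegrableOn U (uIcc a b) := by rwa [uIcc_of_le hab]
  have hφiu : IntegrableOn φ (uIcc a b) := by rwa [uIcc_of_le hab]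
  -- continuity of u
  have huc : ContinuousOn u (Icc a b) := by
    apply (continuousOn_const.add
      ((continuousOn_primitive_interval hUiu).mono (by rw [uIcc_of_le hab]))).congr
    intro x hx; exact hu x hx
  -- difference formulas
  have husub : ∀ x ∈ Icc a b, ∀ y ∈ Icc a b, u y - u x = ∫ t in x..y, U t := by
    intro x hx y hy
    rw [hu x hx, hu y hy, add_sub_add_left_eq_sub]
    exact integral_interval_sub_left (subII hUi haI hy) (subII hUi haI hx)
  have hvsub : ∀ x ∈ Icc a b, ∀ y ∈ Icc a b, v y - v x = ∫ t in x..y, φ t := by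
    intro x hx y hy
    rw [hv x hx, hv y hy, add_sub_add_left_eq_sub]
    exact integral_interval_sub_left (subII hφi haI hy) (subII hφi haI hx)
  -- Lipschitz bound for u
  obtain ⟨L, hL⟩ := isCompact_Icc.exists_bound_of_continuousOn hUc
  have hL0 : 0 ≤ L := le_trans (norm_nonneg _) (hL a haI)
  have hulip : ∀ x ∈ Icc a b, ∀ y ∈ Icc a b, ‖u y - u x‖ ≤ L * |y - x| := by
    intro x hx y hy
    rw [husub x hx y hy]
    apply intervalIntegral.norm_integral_le_of_norm_le_const
    intro t ht
    apply hL t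
    have : Set.uIoc x y ⊆ Icc a b := Set.Ioc_subset_Icc_self.trans
      (Icc_subset_Icc (le_min hx.1 hy.1) (max_le hx.2 hy.2))
    exact this ht
  -- F and D
  set F : ℝ → ℂ := fun x => ∫ t in a..x, φ t with hF
  have hFc : ContinuousOn F (Icc a b) :=
    (continuousOn_primitive_interval hφiu).mono (by rw [uIcc_of_le hab])
  have huφ : IntegrableOn (fun t => u t * φ t) (Icc a b) :=
    hφi.continuousOn_mul huc isCompact_Icc
  have hUv : IntegrableOn (fun t => U t * v t) (Icc a b) := (hUc.mul hvc).integrableOn_Icc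
  set D : ℝ → ℂ := fun y => ∫ t in a..y, (u y - u t) * φ t with hD
  have e1 : ∀ y ∈ Icc a b, D y = u y * F y - ∫ t in a..y, u t * φ t := by
    intro y hy
    have h1 : IntervalIntegrable (fun t => u y * φ t) volume a y :=
      (subII hφi haI hy).const_mul _
    have h2 : IntervalIntegrable (fun t => u t * φ t) volume a y := subII huφ haI hy
    calc D y = ∫ t in a..y, (u y * φ t - u t * φ t) := by
          simp only [hD]; congr 1; ext t; ring
      _ = (∫ t in a..y, u y * φ t) - ∫ t in a..y, u t * φ t := integral_sub h1 h2
      _ = u y * F y - ∫ t in a..y, u t * φ t := by rw [intervalIntegral.integral_const_mul]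
  have hDsub : ∀ y ∈ Icc a b, ∀ z ∈ Icc a b,
      D z - D y = (u z - u y) * F y + ∫ t in y..z, (u z - u t) * φ t := by
    intro y hy z hz
    have h2 : IntervalIntegrable (fun t => u t * φ t) volume y z := subII huφ hy hz
    have h1 : IntervalIntegrable (fun t => u z * φ t) volume y z :=
      (subII hφi hy hz).const_mul _
    have e2 : ∫ t in y..z, (u z - u t) * φ t
        = u z * (F z - F y) - ∫ t in y..z, u t * φ t := by
      calc ∫ t in y..z, (u z - u t) * φ t = ∫ t in y..z, (u z * φ t - u t * φ t) := by
            congr 1; ext t; ring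
        _ = (∫ t in y..z, u z * φ t) - ∫ t in y..z, u t * φ t := integral_sub h1 h2
        _ = u z * (F z - F y) - ∫ t in y..z, u t * φ t := by
            rw [intervalIntegral.integral_const_mul]
            congr 2
            exact (integral_interval_sub_left (subII hφi haI hz) (subII hφi haI hy)).symm
    have e3 : (∫ t in a..z, u t * φ t) - ∫ t in a..y, u t * φ t
        = ∫ t in y..z, u t * φ t :=
      integral_interval_sub_left (subII huφ haI hz) (subII huφ haI hy)
    rw [e1 y hy, e1 z hz, e2]
    rw [← e3]
    ring
  -- derivative of D
  have hmemIcc : ∀ y ∈ Ico a b, Icc a b ∈ nhdsWithin y (Ici y) := by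
    intro y hy
    apply mem_nhdsWithin.2 ⟨Iio b, isOpen_Iio, hy.2, ?_⟩
    rintro t ⟨ht1, ht2⟩
    exact ⟨hy.1.trans ht2, ht1.le⟩
  have huD : ∀ y ∈ Ico a b, HasDerivWithinAt u (U y) (Ici y) y := by
    intro y hy
    have h1 := (primHasDeriv hUc hy).const_add (u a)
    apply h1.congr_of_eventuallyEq_of_mem _ Set.self_mem_Ici
    · filter_upwards [hmemIcc y hy] with z hz
      exact hu z hz
  -- tendsto of the primitive of ‖φ‖ based at y
  have hPtend : ∀ y ∈ Ico a b,
      Filter.Tendsto (fun z => ∫ t in y..z, ‖φ t‖) (nhdsWithin y (Ici y)) (nhds 0) := by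
    intro y hy
    have hyI : y ∈ Icc a b := ⟨hy.1, hy.2.le⟩
    have hc : ContinuousOn (fun z => ∫ t in y..z, ‖φ t‖) (Icc a b) := by
      have h1 := continuousOn_primitive_interval' (μ := volume)
        (subII hφi.norm haI hbI) (by rwa [uIcc_of_le hab])
      exact h1.mono (by rw [uIcc_of_le hab])
    have h2 : Filter.Tendsto (fun z => ∫ t in y..z, ‖φ t‖) (nhdsWithin y (Ici y))
        (nhds ((fun z => ∫ t in y..z, ‖φ t‖) y)) :=
      (hc y hyI).mono_of_mem_nhdsWithin (hmemIcc y hy)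
    simp only [intervalIntegral.integral_same] at h2
    exact h2
  have hDd : ∀ y ∈ Ico a b, HasDerivWithinAt D (U y * F y) (Ici y) y := by
    intro y hy
    have hyI : y ∈ Icc a b := ⟨hy.1, hy.2.le⟩
    rw [hasDerivWithinAt_iff_isLittleO]
    have t1 : (fun z => (u z - u y - (z - y) • U y) * F y)
        =o[nhdsWithin y (Ici y)] fun z => z - y := by
      have h := hasDerivWithinAt_iff_isLittleO.1 (huD y hy)
      have h2 := h.mul_isBigO
        (Asymptotics.isBigO_const_const (F y) (one_ne_zero (α := ℝ)) (nhdsWithin y (Ici y)))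
      simpa using h2
    have t2 : (fun z => ∫ t in y..z, (u z - u t) * φ t)
        =o[nhdsWithin y (Ici y)] fun z => z - y := by
      rw [Asymptotics.isLittleO_iff]
      intro ε hε
      have hL1 : (0:ℝ) < L + 1 := by linarith
      have hεL : 0 < ε / (L + 1) := by positivity
      have h1 := (hPtend y hy).eventually_lt_const hεL
      filter_upwards [hmemIcc y hy, h1, self_mem_nhdsWithin] with z hzI hzP hzy
      have hzy' : y ≤ z := hzy
      have hmemz : ∀ t ∈ Icc y z, t ∈ Icc a b := fun t ht => ⟨hy.1.trans ht.1, ht.2.trans hzI.2⟩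
      have hint1 : IntervalIntegrable (fun t => ‖(u z - u t) * φ t‖) volume y z := by
        have hi : IntervalIntegrable (fun t => (u z - u t) * φ t) volume y z := by
          have : (fun t => (u z - u t) * φ t) = fun t => u z * φ t - u t * φ t := by
            ext t; ring
          rw [this]
          exact ((subII hφi hyI hzI).const_mul _).sub (subII huφ hyI hzI)
        exact hi.norm
      have hint2 : IntervalIntegrable (fun t => (L * (z - y)) * ‖φ t‖) volume y z :=
        (subII hφi.norm hyI hzI).const_mul _
      have hb1 : ‖∫ t in y..z, (u z - u t) * φ t‖ ≤ ∫ t in y..z, (L * (z - y)) * ‖φ t‖ := by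
        refine le_trans (intervalIntegral.norm_integral_le_integral_norm hzy') ?_
        apply intervalIntegral.integral_mono_on hzy' hint1 hint2
        intro t ht
        rw [norm_mul]
        have h3 : ‖u z - u t‖ ≤ L * (z - y) := by
          refine le_trans (hulip t (hmemz t ht) z hzI) ?_
          have : |z - t| ≤ z - y := by
            rw [abs_of_nonneg (by linarith [ht.2])]
            linarith [ht.1]
          exact mul_le_mul_of_nonneg_left this hL0
        exact mul_le_mul_of_nonneg_right h3 (norm_nonneg _)
      have hb2 : ∫ t in y..z, (L * (z - y)) * ‖φ t‖
          = (L * (z - y)) * ∫ t in y..z, ‖φ t‖ := intervalIntegral.integral_const_mul _ _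
      have hPnn : 0 ≤ ∫ t in y..z, ‖φ t‖ :=
        intervalIntegral.integral_nonneg hzy' (fun t _ => norm_nonneg _)
      have hzynn : (0:ℝ) ≤ z - y := by linarith
      calc ‖∫ t in y..z, (u z - u t) * φ t‖
          ≤ (L * (z - y)) * ∫ t in y..z, ‖φ t‖ := by rw [← hb2]; exact hb1
        _ ≤ (L * (z - y)) * (ε / (L + 1)) := by
            apply mul_le_mul_of_nonneg_left hzP.le (by positivity)
        _ ≤ ε * (z - y) := by
            rw [div_eq_mul_inv]
            have h4 : L * (z - y) * (ε * (L + 1)⁻¹) = (ε * (z - y)) * (L * (L + 1)⁻¹) := by ring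
            have h5 : L * (L + 1)⁻¹ ≤ 1 := by
              rw [← div_eq_mul_inv, div_le_one hL1]; linarith
            nlinarith [mul_nonneg hε.le hzynn]
        _ = ε * ‖z - y‖ := by rw [Real.norm_eq_abs, abs_of_nonneg hzynn]
    have hsum := t1.add t2
    apply hsum.congr' _ (Filter.EventuallyEq.refl _ _)
    filter_upwards [hmemIcc y hy] with z hz
    have hsmul : ((z : ℝ) - y) • (U y * F y) = ((z - y) • U y) * F y := by
      simp only [Complex.real_smul, Complex.ofReal_sub]; ring
    rw [hDsub y hyI z hz, hsmul]
    ring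
  -- continuity of D
  have huφu : IntegrableOn (fun t => u t * φ t) (uIcc a b) := by rwa [uIcc_of_le hab]
  have hUvu : IntegrableOn (fun t => U t * v t) (uIcc a b) := by rwa [uIcc_of_le hab]
  have hDc : ContinuousOn D (Icc a b) := by
    apply ContinuousOn.congr
      (f := fun y => u y * F y - ∫ t in a..y, u t * φ t)
      ((huc.mul hFc).sub ((continuousOn_primitive_interval huφu).mono (by rw [uIcc_of_le hab])))
    intro y hy; exact e1 y hy
  -- the function H
  set H : ℝ → ℂ := fun y => u y * v a + D y - ∫ t in a..y, U t * v t with hHdef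
  have hHc : ContinuousOn H (Icc a b) :=
    ((huc.mul continuousOn_const).add hDc).sub
      ((continuousOn_primitive_interval hUvu).mono (by rw [uIcc_of_le hab]))
  have hHd : ∀ y ∈ Ico a b, HasDerivWithinAt H 0 (Ici y) y := by
    intro y hy
    have hyI : y ∈ Icc a b := ⟨hy.1, hy.2.le⟩
    have h1 := ((huD y hy).mul_const (v a)).add (hDd y hy)
    have h2 := primHasDeriv (hUc.mul hvc) hy
    have h3 := h1.sub h2
    have h4 : U y * v a + U y * F y - (U * v) y = 0 := by
      rw [Pi.mul_apply, hv y hyI]; simp only [hF]; ring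
    rw [h4] at h3
    exact h3
  have hHb := constant_of_has_deriv_right_zero hHc hHd b hbI
  have hDa : D a = 0 := by simp only [hD, intervalIntegral.integral_same]
  have hFb : F b = v b - v a := by rw [hv b hbI]; ring
  rw [hHdef] at hHb
  simp only [intervalIntegral.integral_same] at hHb
  rw [e1 b hbI, hFb, hDa] at hHb
  have hadd : ∫ t in a..b, (U t * v t + u t * φ t)
      = (∫ t in a..b, U t * v t) + ∫ t in a..b, u t * φ t :=
    intervalIntegral.integral_add (subII hUv haI hbI) (subII huφ haI hbI)
  rw [hadd]
  linear_combination hHb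

/-- A mode associated with a quasi-eigenvalue with `Re ω > 0` has at most one zero in
`[a₁,a₂]`, and any zero lies in the turning interval `[x₊,x⁺]`. -/
theorem stmt11 (a₁ a₂ : ℝ) (h12 : a₁ < a₂) (B : ℝ → ℝ)
    (hBint : MeasureTheory.IntegrableOn B (Set.Icc a₁ a₂))
    (hB0 : ∀ᵐ x ∂(MeasureTheory.volume.restrict (Set.Icc a₁ a₂)), 0 ≤ B x)
    (ν₁ μ₂ : ℝ) (hν₁ : 0 ≤ ν₁) (hμ₂ : 0 ≤ μ₂)
    (ω : ℂ) (hre : 0 < ω.re) (him : ω.im < 0)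
    (θ g : ℝ → ℂ)
    (hθC : ContinuousOn θ (Set.Icc a₁ a₂)) (hgC : ContinuousOn g (Set.Icc a₁ a₂))
    (hint : MeasureTheory.IntegrableOn (fun t => (B t : ℂ) * θ t) (Set.Icc a₁ a₂))
    (hθ : ∀ x ∈ Set.Icc a₁ a₂, θ x = θ a₁ + ∫ t in a₁..x, g t)
    (hg : ∀ x ∈ Set.Icc a₁ a₂, g x = g a₁ + ∫ t in a₁..x, -(ω ^ 2) * (B t : ℂ) * θ t)
    (hic0 : θ a₁ = 1) (hic1 : g a₁ = -Complex.I * ω * (ν₁ : ℂ))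
    (hbc2 : (μ₂ : ℂ) * g a₂ = Complex.I * ω * θ a₂)
    (xs xt : ℝ) (hxs : a₁ ≤ xs) (hxst : xs ≤ xt) (hxt : xt ≤ a₂)
    (hneg : ∀ x ∈ Set.Icc a₁ a₂, x < xs → ((starRingEnd ℂ) (θ x) * g x).im < 0)
    (hzero : ∀ x ∈ Set.Icc xs xt, ((starRingEnd ℂ) (θ x) * g x).im = 0)
    (hpos : ∀ x ∈ Set.Icc a₁ a₂, xt < x → 0 < ((starRingEnd ℂ) (θ x) * g x).im) :
    (∀ u ∈ Set.Icc a₁ a₂, ∀ v ∈ Set.Icc a₁ a₂, θ u = 0 → θ v = 0 → u = v) ∧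
    (∀ x₀ ∈ Set.Icc a₁ a₂, θ x₀ = 0 → x₀ ∈ Set.Icc xs xt) := by
  have part2 : ∀ x₀ ∈ Set.Icc a₁ a₂, θ x₀ = 0 → x₀ ∈ Set.Icc xs xt := by
    intro x₀ hx₀ h0
    have h1 : ((starRingEnd ℂ) (θ x₀) * g x₀).im = 0 := by rw [h0]; simp
    constructor
    · by_contra hc
      push_neg at hc
      exact absurd h1 (ne_of_lt (hneg x₀ hx₀ hc))
    · by_contra hc
      push_neg at hc
      exact absurd h1 (ne_of_gt (hpos x₀ hx₀ hc))
  have hxsc : xs ∈ Icc a₁ a₂ := ⟨hxs, hxst.trans hxt⟩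
  have hxtc : xt ∈ Icc a₁ a₂ := ⟨hxs.trans hxst, hxt⟩
  have haI : a₁ ∈ Icc a₁ a₂ := ⟨le_rfl, h12.le⟩
  set φ : ℝ → ℂ := fun t => -(ω ^ 2) * ((B t : ℂ) * θ t) with hφdef
  have hφi : IntegrableOn φ (Icc a₁ a₂) := hint.const_mul _
  have hg' : ∀ x ∈ Icc a₁ a₂, g x = g a₁ + ∫ t in a₁..x, φ t := by
    intro x hx
    rw [hg x hx]
    congr 1
    apply intervalIntegral.integral_congr
    intro t _
    simp only [hφdef]; ring
  have hgi : IntegrableOn g (Icc a₁ a₂) := hgC.integrableOn_Icc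
  have hθsub : ∀ x ∈ Icc a₁ a₂, ∀ y ∈ Icc a₁ a₂, θ y - θ x = ∫ t in x..y, g t := by
    intro x hx y hy
    rw [hθ x hx, hθ y hy, add_sub_add_left_eq_sub]
    exact integral_interval_sub_left (subII hgi haI hy) (subII hgi haI hx)
  have hgsub : ∀ x ∈ Icc a₁ a₂, ∀ y ∈ Icc a₁ a₂, g y - g x = ∫ t in x..y, φ t := by
    intro x hx y hy
    rw [hg' x hx, hg' y hy, add_sub_add_left_eq_sub]
    exact integral_interval_sub_left (subII hφi haI hy) (subII hφi haI hx)
  have claim : ∀ p q, p ∈ Icc a₁ a₂ → q ∈ Icc a₁ a₂ → p < q → θ p = 0 → θ q = 0 → False := by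
    intro p q hp hq hpq hθp hθq
    have hpI : p ∈ Icc xs xt := part2 p hp hθp
    have hqI : q ∈ Icc xs xt := part2 q hq hθq
    have hsub : Icc xs xt ⊆ Icc a₁ a₂ := Icc_subset_Icc hxs hxt
    -- integration by parts on [xs, xt]
    have hibp := ibp hxst (fun x => (starRingEnd ℂ) (θ x)) (fun x => (starRingEnd ℂ) (g x)) g φ
      (continuous_star.comp_continuousOn (hgC.mono hsub))
      (hgC.mono hsub) (hφi.mono_set hsub)
      (by
        intro x hx
        have h1 := hθsub xs hxsc x (hsub hx)
        have h2 : (starRingEnd ℂ) (θ x - θ xs)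
            = (starRingEnd ℂ) (∫ t in xs..x, g t) := by rw [h1]
        rw [map_sub] at h2
        have h3 : (∫ t in xs..x, (starRingEnd ℂ) (g t))
            = (starRingEnd ℂ) (∫ t in xs..x, g t) := by
          have := Complex.conjCLE.toContinuousLinearMap.intervalIntegral_comp_comm
            (subII hgi (hsub (left_mem_Icc.2 hxst)) (hsub hx))
          simpa using this
        rw [h3, ← h2]
        ring
      )
      (by
        intro x hx
        have h1 := hgsub xs hxsc x (hsub hx)
        linear_combination h1
      )
    -- imaginary part of both sides
    have hIm : (∫ t in xs..xt, ((starRingEnd ℂ) (g t) * g t + (starRingEnd ℂ) (θ t) * φ t)).im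
        = 0 := by
      rw [← hibp, Complex.sub_im, hzero xt (right_mem_Icc.2 hxst),
        hzero xs (left_mem_Icc.2 hxst)]
      ring
    -- pointwise computation of imaginary part
    have hptw : ∀ t, ((starRingEnd ℂ) (g t) * g t + (starRingEnd ℂ) (θ t) * φ t).im
        = (-(ω ^ 2).im) * (B t * Complex.normSq (θ t)) := by
      intro t
      simp only [hφdef, Complex.add_im, Complex.mul_im, Complex.conj_re, Complex.conj_im,
        Complex.neg_re, Complex.neg_im, Complex.ofReal_re, Complex.ofReal_im,
        Complex.mul_re, Complex.normSq_apply]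
      ring
    -- integrand integrable
    have hri : IntegrableOn (fun t => B t * Complex.normSq (θ t)) (Icc a₁ a₂) :=
      hBint.mul_continuousOn (Complex.continuous_normSq.comp_continuousOn hθC) isCompact_Icc
    have hIm2 : ∫ t in Ioc xs xt, ((-(ω ^ 2).im) * (B t * Complex.normSq (θ t))) = 0 := by
      have h1 : (∫ t in xs..xt, ((starRingEnd ℂ) (g t) * g t + (starRingEnd ℂ) (θ t) * φ t)).im
          = ∫ t in xs..xt, ((starRingEnd ℂ) (g t) * g t + (starRingEnd ℂ) (θ t) * φ t).im := by
        rw [intervalIntegral.integral_of_le hxst, intervalIntegral.integral_of_le hxst]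
        have hInt : IntegrableOn
            (fun t => (starRingEnd ℂ) (g t) * g t + (starRingEnd ℂ) (θ t) * φ t)
            (Ioc xs xt) := by
          apply IntegrableOn.mono_set _ (Ioc_subset_Icc_self (a := xs) (b := xt))
          exact (((hgC.mono hsub).star.mul (hgC.mono hsub)).integrableOn_Icc).add
            ((hφi.mono_set hsub).continuousOn_mul
              (continuous_star.comp_continuousOn (hθC.mono hsub)) isCompact_Icc)
        exact (integral_im hInt).symm
      rw [h1] at hIm
      rw [← intervalIntegral.integral_of_le hxst]
      rw [← hIm]
      apply intervalIntegral.integral_congr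
      intro t _
      exact (hptw t).symm
    have hω2 : (0:ℝ) < -(ω ^ 2).im := by
      have : (ω ^ 2).im = 2 * ω.re * ω.im := by rw [sq, Complex.mul_im]; ring
      rw [this]; nlinarith
    -- conclude B θ = 0 a.e. on Ioc xs xt
    have hr0 : (fun t => B t * Complex.normSq (θ t)) =ᵐ[volume.restrict (Ioc xs xt)] 0 := by
      have hsub' : Ioc xs xt ⊆ Icc a₁ a₂ := Ioc_subset_Icc_self.trans hsub
      have hnn : 0 ≤ᵐ[volume.restrict (Ioc xs xt)]
          fun t => B t * Complex.normSq (θ t) := by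
        filter_upwards [ae_restrict_of_ae_restrict_of_subset hsub' hB0] with t ht
        exact mul_nonneg ht (Complex.normSq_nonneg _)
      have hint2 : IntegrableOn (fun t => B t * Complex.normSq (θ t)) (Ioc xs xt) :=
        hri.mono_set hsub'
      have h0 : ∫ t in Ioc xs xt, B t * Complex.normSq (θ t) = 0 := by
        have h2 : ∫ t in Ioc xs xt, ((-(ω ^ 2).im) * (B t * Complex.normSq (θ t)))
            = (-(ω ^ 2).im) * ∫ t in Ioc xs xt, B t * Complex.normSq (θ t) :=
          MeasureTheory.integral_const_mul _ _
        rw [h2] at hIm2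
        exact (mul_eq_zero.1 hIm2).resolve_left (ne_of_gt hω2)
      exact (MeasureTheory.setIntegral_eq_zero_iff_of_nonneg_ae hnn hint2).1 h0
    have hφ0 : φ =ᵐ[volume.restrict (Ioc xs xt)] 0 := by
      filter_upwards [hr0] with t ht
      simp only [Pi.zero_apply] at ht ⊢
      rcases mul_eq_zero.1 ht with h | h
      · simp [hφdef, h]
      · simp [hφdef, Complex.normSq_eq_zero.1 h]
    -- g is constant on [xs, xt]
    have hgconst : ∀ x ∈ Icc xs xt, g x = g xs := by
      intro x hx
      have h1 := hgsub xs hxsc x (hsub hx)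
      have h2 : ∫ t in xs..x, φ t = 0 := by
        rw [intervalIntegral.integral_of_le hx.1]
        apply MeasureTheory.integral_eq_zero_of_ae
        exact ae_restrict_of_ae_restrict_of_subset (Ioc_subset_Ioc_right hx.2) hφ0
      rw [h2] at h1
      linear_combination h1
    -- θ is affine on [xs, xt]
    have hθaff : ∀ x ∈ Icc xs xt, θ x = θ xs + (x - xs) • g xs := by
      intro x hx
      have h1 := hθsub xs hxsc x (hsub hx)
      have h2 : ∫ t in xs..x, g t = ∫ t in xs..x, g xs := by
        apply intervalIntegral.integral_congr
        intro t ht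
        rw [uIcc_of_le hx.1] at ht
        exact hgconst t ⟨ht.1, ht.2.trans hx.2⟩
      rw [h2, intervalIntegral.integral_const] at h1
      linear_combination h1
    -- two zeros force θ xs = g xs = 0
    have hgxs : g xs = 0 := by
      have e1 := hθaff p hpI
      have e2 := hθaff q hqI
      rw [hθp] at e1; rw [hθq] at e2
      simp only [Complex.real_smul, Complex.ofReal_sub] at e1 e2
      have e3 : ((p : ℂ) - q) * g xs = 0 := by linear_combination e2 - e1
      have hpq' : ((p : ℂ) - q) ≠ 0 := by
        rw [sub_ne_zero]
        exact_mod_cast ne_of_lt hpq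
      exact (mul_eq_zero.1 e3).resolve_left hpq'
    have hθxs : θ xs = 0 := by
      have e1 := hθaff p hpI
      rw [hθp, hgxs, smul_zero, add_zero] at e1
      exact e1.symm
    -- Gronwall-type backward uniqueness
    set K : ℝ → ℝ := fun t => 1 + ‖ω ^ 2‖ * |B t| with hKdef
    have hKi : IntegrableOn K (Icc a₁ a₂) := by
      apply Integrable.add
      · exact integrableOn_const measure_Icc_lt_top.ne
      · exact hBint.abs.const_mul _
    have hK0 : ∀ t, 0 ≤ K t := fun t => by positivity
    set w : ℝ → ℝ := fun x => ‖θ x‖ + ‖g x‖ with hwdef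
    have hwc : ContinuousOn w (Icc a₁ a₂) := hθC.norm.add hgC.norm
    have hw0 : ∀ t, 0 ≤ w t := fun t => add_nonneg (norm_nonneg _) (norm_nonneg _)
    have hKw : IntegrableOn (fun t => K t * w t) (Icc a₁ a₂) :=
      hKi.mul_continuousOn hwc isCompact_Icc
    have hsub2 : Icc a₁ xs ⊆ Icc a₁ a₂ := Icc_subset_Icc_right hxsc.2
    have key : ∀ x ∈ Icc a₁ xs, w x ≤ ∫ t in x..xs, K t * w t := by
      intro x hx
      have hxI : x ∈ Icc a₁ a₂ := hsub2 hx
      have h1 : θ x = -∫ t in x..xs, g t := by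
        have := hθsub x hxI xs hxsc
        rw [hθxs] at this
        linear_combination -this
      have h2 : g x = -∫ t in x..xs, φ t := by
        have := hgsub x hxI xs hxsc
        rw [hgxs] at this
        linear_combination -this
      have hxxs : Icc x xs ⊆ Icc a₁ a₂ := Icc_subset_Icc hx.1 hxsc.2
      have b1 : ‖θ x‖ ≤ ∫ t in x..xs, ‖g t‖ := by
        rw [h1, norm_neg]
        exact intervalIntegral.norm_integral_le_integral_norm hx.2
      have b2 : ‖g x‖ ≤ ∫ t in x..xs, ‖φ t‖ := by
        rw [h2, norm_neg]
        exact intervalIntegral.norm_integral_le_integral_norm hx.2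
      have hii1 : IntervalIntegrable (fun t => ‖g t‖) volume x xs := subII hgi.norm hxI hxsc
      have hii2 : IntervalIntegrable (fun t => ‖φ t‖) volume x xs := subII hφi.norm hxI hxsc
      have hiiKw : IntervalIntegrable (fun t => K t * w t) volume x xs := subII hKw hxI hxsc
      have b3 : (∫ t in x..xs, ‖g t‖) + (∫ t in x..xs, ‖φ t‖)
          = ∫ t in x..xs, (‖g t‖ + ‖φ t‖) := (intervalIntegral.integral_add hii1 hii2).symm
      have b4 : ∫ t in x..xs, (‖g t‖ + ‖φ t‖) ≤ ∫ t in x..xs, K t * w t := by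
        apply intervalIntegral.integral_mono_on hx.2 (hii1.add hii2) hiiKw
        intro t ht
        have hφn : ‖φ t‖ = ‖ω ^ 2‖ * (|B t| * ‖θ t‖) := by
          simp only [hφdef, norm_mul, norm_neg, Complex.norm_real, Real.norm_eq_abs]
        have hgle : ‖g t‖ ≤ w t := by
          simp only [hwdef]; linarith [norm_nonneg (θ t)]
        have hθle : ‖θ t‖ ≤ w t := by
          simp only [hwdef]; linarith [norm_nonneg (g t)]
        have hcnn : 0 ≤ ‖ω ^ 2‖ * |B t| := by positivity
        show ‖g t‖ + ‖φ t‖ ≤ (1 + ‖ω ^ 2‖ * |B t|) * (‖θ t‖ + ‖g t‖)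
        rw [hφn]
        nlinarith [mul_nonneg hcnn (norm_nonneg (g t)), norm_nonneg (θ t)]
      calc w x = ‖θ x‖ + ‖g x‖ := rfl
        _ ≤ (∫ t in x..xs, ‖g t‖) + (∫ t in x..xs, ‖φ t‖) := add_le_add b1 b2
        _ = ∫ t in x..xs, (‖g t‖ + ‖φ t‖) := b3
        _ ≤ ∫ t in x..xs, K t * w t := b4
    -- the set where w vanishes up to xs
    set S : Set ℝ := {x | x ∈ Icc a₁ xs ∧ ∀ y ∈ Icc x xs, w y = 0} with hSdef
    have hxsS : xs ∈ S := by
      refine ⟨⟨hxs, le_rfl⟩, ?_⟩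
      intro y hy
      have : y = xs := le_antisymm hy.2 hy.1
      rw [this]
      simp [hwdef, hθxs, hgxs]
    have hbdd : BddBelow S := ⟨a₁, fun x hx => hx.1.1⟩
    have hSne : S.Nonempty := ⟨xs, hxsS⟩
    set m := sInf S with hmdef
    have hma : a₁ ≤ m := le_csInf hSne (fun x hx => hx.1.1)
    have hmxs : m ≤ xs := csInf_le hbdd hxsS
    have hmI : m ∈ Icc a₁ xs := ⟨hma, hmxs⟩
    have hS0 : ∀ y, m < y → y ≤ xs → w y = 0 := by
      intro y h1 h2
      obtain ⟨x, hxS, hxy⟩ := (csInf_lt_iff hbdd hSne).1 h1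
      exact hxS.2 y ⟨hxy.le, h2⟩
    have htail : ∀ x, m ≤ x → x ≤ xs → (∫ t in x..xs, K t * w t) = 0 := by
      intro x h1 h2
      rw [intervalIntegral.integral_of_le h2]
      apply MeasureTheory.setIntegral_eq_zero_of_forall_eq_zero
      intro t ht
      rw [hS0 t (lt_of_le_of_lt h1 ht.1) ht.2, mul_zero]
    have hwm : w m = 0 := by
      have h1 := key m hmI
      rw [htail m le_rfl hmxs] at h1
      linarith [hw0 m]
    have hmS : m ∈ S := by
      refine ⟨hmI, ?_⟩
      intro y hy
      rcases eq_or_lt_of_le hy.1 with h | h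
      · rw [← h]; exact hwm
      · exact hS0 y h hy.2
    have hma' : m = a₁ := by
      by_contra hne
      have hlt : a₁ < m := lt_of_le_of_ne hma (Ne.symm hne)
      have hmI2 : m ∈ Icc a₁ a₂ := ⟨hma, hmxs.trans hxsc.2⟩
      have hKm : IntegrableOn K (uIcc a₁ m) := by
        rw [uIcc_of_le hma]
        exact hKi.mono_set (Icc_subset_Icc_right hmI2.2)
      have hVc : ContinuousOn (fun x => ∫ t in x..m, K t) (Icc a₁ m) :=
        (continuousOn_primitive_interval_left hKm).mono (by rw [uIcc_of_le hma])
      have hVm : Filter.Tendsto (fun x => ∫ t in x..m, K t)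
          (nhdsWithin m (Icc a₁ m)) (nhds 0) := by
        have h2 : Filter.Tendsto (fun x => ∫ t in x..m, K t) (nhdsWithin m (Icc a₁ m))
            (nhds ((fun x => ∫ t in x..m, K t) m)) := hVc m ⟨hma, le_rfl⟩
        simp only [intervalIntegral.integral_same] at h2
        exact h2
      have hev : ∀ᶠ x in nhdsWithin m (Ico a₁ m), (∫ t in x..m, K t) < 1/2 :=
        (hVm.eventually_lt_const (by norm_num)).filter_mono
          (nhdsWithin_mono m Ico_subset_Icc_self)
      have hne2 : (nhdsWithin m (Ico a₁ m)).NeBot := by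
        apply mem_closure_iff_nhdsWithin_neBot.1
        rw [closure_Ico hlt.ne]
        exact ⟨hma, le_rfl⟩
      obtain ⟨c, hcI, hcV⟩ := (eventually_mem_nhdsWithin.and hev).exists
      -- max of w on [c, m]
      have hcm : Icc c m ⊆ Icc a₁ a₂ := Icc_subset_Icc hcI.1 hmI2.2
      obtain ⟨pp, hppmem, hppmax⟩ := isCompact_Icc.exists_isMaxOn
        (nonempty_Icc.2 hcI.2.le) (hwc.mono hcm)
      have hppI : pp ∈ Icc a₁ xs := ⟨hcI.1.trans hppmem.1, hppmem.2.trans hmxs⟩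
      have hppI2 : pp ∈ Icc a₁ a₂ := hcm hppmem
      have hcI2 : c ∈ Icc a₁ a₂ := ⟨hcI.1, hcI.2.le.trans hmI2.2⟩
      have e1 : w pp ≤ ∫ t in pp..xs, K t * w t := key pp hppI
      have e2 : (∫ t in pp..m, K t * w t) + (∫ t in m..xs, K t * w t)
          = ∫ t in pp..xs, K t * w t :=
        intervalIntegral.integral_add_adjacent_intervals
          (subII hKw hppI2 hmI2) (subII hKw hmI2 hxsc)
      have e3 : (∫ t in m..xs, K t * w t) = 0 := htail m le_rfl hmxs
      have e4 : ∫ t in pp..m, K t * w t ≤ ∫ t in pp..m, K t * w pp := by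
        apply intervalIntegral.integral_mono_on hppmem.2 (subII hKw hppI2 hmI2)
          ((subII hKi hppI2 hmI2).mul_const _)
        intro t ht
        have htm : t ∈ Icc c m := ⟨hppmem.1.trans ht.1, ht.2⟩
        exact mul_le_mul_of_nonneg_left (hppmax htm) (hK0 t)
      have e5 : ∫ t in pp..m, K t * w pp = (∫ t in pp..m, K t) * w pp :=
        intervalIntegral.integral_mul_const _ _
      have e6 : ∫ t in pp..m, K t ≤ ∫ t in c..m, K t := by
        have h7 : (∫ t in c..m, K t) - (∫ t in c..pp, K t) = ∫ t in pp..m, K t :=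
          integral_interval_sub_left (subII hKi hcI2 hmI2) (subII hKi hcI2 hppI2)
        have h8 : 0 ≤ ∫ t in c..pp, K t :=
          intervalIntegral.integral_nonneg hppmem.1 (fun t _ => hK0 t)
        linarith
      have hwpp : w pp = 0 := by
        have h9 : w pp ≤ (∫ t in c..m, K t) * w pp := by
          calc w pp ≤ ∫ t in pp..xs, K t * w t := e1
            _ = (∫ t in pp..m, K t * w t) + (∫ t in m..xs, K t * w t) := e2.symm
            _ = ∫ t in pp..m, K t * w t := by rw [e3, add_zero]
            _ ≤ (∫ t in pp..m, K t) * w pp := by rw [← e5]; exact e4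
            _ ≤ (∫ t in c..m, K t) * w pp :=
              mul_le_mul_of_nonneg_right e6 (hw0 pp)
        nlinarith [hw0 pp, hcV]
      have hcS : c ∈ S := by
        refine ⟨⟨hcI.1, hcI.2.le.trans hmxs⟩, ?_⟩
        intro y hy
        rcases le_or_gt y m with h | h
        · have h5 := isMaxOn_iff.1 hppmax y ⟨hy.1, h⟩
          have h6 := hw0 y
          rw [hwpp] at h5
          linarith
        · exact hS0 y h hy.2
      have : m ≤ c := csInf_le hbdd hcS
      exact absurd this (not_le.2 hcI.2)
    -- contradiction with θ a₁ = 1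
    have hwa : w a₁ = 0 := hma' ▸ hwm
    have : ‖θ a₁‖ = 0 := by
      have := norm_nonneg (g a₁)
      have := norm_nonneg (θ a₁)
      simp only [hwdef] at hwa
      linarith
    rw [hic0] at this
    simp at this
  refine ⟨?_, part2⟩
  intro p hp q hq hp0 hq0
  by_contra hne
  rcases lt_or_gt_of_ne hne with h | h
  · exact claim p q hp hq h hp0 hq0
  · exact claim q p hq hp h hq0 hp0
end

section
/- If ω = iζ is a nonlinear eigenvalue (i.e., there is a nontrivial y ∈ W^{2,1} with y'' = -ω² y [b₁+(b₂-b₁)χ_{ℂ₊}(y²)] and the radiation boundary conditions), then ω₁ = i·conj(ζ) is also a nonlinear eigenvalue, with eigenfunction y₁ = i·conj(y). More generally, the set Σ^{nl} of nonlinear eigenvalues is symmetric with respect to the imaginary axis: ω ∈ Σ^{nl} implies -conj(ω) ∈ Σ^{nl}. -/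
open MeasureTheory Set

noncomputable def chiC (w : ℂ) : ℝ := if 0 < w.im then 1 else 0

def IsNLMode (a₁ a₂ : ℝ) (b₁ b₂ : ℝ → ℝ) (ν₁ μ₂ : ℝ) (ω : ℂ) (y g : ℝ → ℂ) : Prop :=
  ContinuousOn y (Set.Icc a₁ a₂) ∧ ContinuousOn g (Set.Icc a₁ a₂) ∧
  MeasureTheory.IntegrableOn
    (fun t => ((b₁ t + (b₂ t - b₁ t) * chiC (y t ^ 2) : ℝ) : ℂ) * y t) (Set.Icc a₁ a₂) ∧
  (∀ x ∈ Set.Icc a₁ a₂, y x = y a₁ + ∫ t in a₁..x, g t) ∧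
  (∀ x ∈ Set.Icc a₁ a₂,
    g x = g a₁ + ∫ t in a₁..x, -(ω ^ 2) * ((b₁ t + (b₂ t - b₁ t) * chiC (y t ^ 2) : ℝ) : ℂ) * y t) ∧
  g a₁ = -Complex.I * ω * (ν₁ : ℂ) * y a₁ ∧
  (μ₂ : ℂ) * g a₂ = Complex.I * ω * y a₂ ∧
  ∃ x ∈ Set.Icc a₁ a₂, y x ≠ 0

lemma chiC_conj_sq (z : ℂ) : chiC ((Complex.I * (starRingEnd ℂ) z) ^ 2) = chiC (z ^ 2) := by
  have h : ((Complex.I * (starRingEnd ℂ) z) ^ 2).im = (z ^ 2).im := by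
    have : (Complex.I * (starRingEnd ℂ) z) ^ 2 = -(starRingEnd ℂ) (z ^ 2) := by
      rw [mul_pow, Complex.I_sq, map_pow]; ring
    rw [this]
    simp [← map_pow]
  unfold chiC
  rw [h]

lemma intervalIntegral_conj (f : ℝ → ℂ) (a b : ℝ) :
    ∫ t in a..b, (starRingEnd ℂ) (f t) = (starRingEnd ℂ) (∫ t in a..b, f t) := by
  simp only [intervalIntegral, integral_conj, map_sub]

/-- The nonlinear spectrum is symmetric w.r.t. the imaginary axis: if `ω` is a nonlinear
eigenvalue with eigenfunction `y`, then `-conj ω` is a nonlinear eigenvalue with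
eigenfunction `i · conj y` (for `ω = iζ` this is `ω₁ = i conj ζ`, `y₁ = i conj y`). -/
theorem stmt16 (a₁ a₂ : ℝ) (h12 : a₁ < a₂) (b₁ b₂ : ℝ → ℝ)
    (hb1 : ∀ᵐ x ∂(MeasureTheory.volume.restrict (Set.Icc a₁ a₂)), 0 ≤ b₁ x)
    (hb12 : ∀ᵐ x ∂(MeasureTheory.volume.restrict (Set.Icc a₁ a₂)), b₁ x ≤ b₂ x)
    (ν₁ μ₂ : ℝ) (hν₁ : 0 ≤ ν₁) (hμ₂ : 0 ≤ μ₂) :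
    (∀ (ω : ℂ) (y g : ℝ → ℂ), IsNLMode a₁ a₂ b₁ b₂ ν₁ μ₂ ω y g →
      IsNLMode a₁ a₂ b₁ b₂ ν₁ μ₂ (-(starRingEnd ℂ) ω)
        (fun x => Complex.I * (starRingEnd ℂ) (y x))
        (fun x => Complex.I * (starRingEnd ℂ) (g x))) ∧
    (∀ ω : ℂ, (∃ y g : ℝ → ℂ, IsNLMode a₁ a₂ b₁ b₂ ν₁ μ₂ ω y g) →
      ∃ y g : ℝ → ℂ, IsNLMode a₁ a₂ b₁ b₂ ν₁ μ₂ (-(starRingEnd ℂ) ω) y g) := by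
  have main : ∀ (ω : ℂ) (y g : ℝ → ℂ), IsNLMode a₁ a₂ b₁ b₂ ν₁ μ₂ ω y g →
      IsNLMode a₁ a₂ b₁ b₂ ν₁ μ₂ (-(starRingEnd ℂ) ω)
        (fun x => Complex.I * (starRingEnd ℂ) (y x))
        (fun x => Complex.I * (starRingEnd ℂ) (g x)) := by
    intro ω y g ⟨hy, hg, hint, heq1, heq2, hbc1, hbc2, x0, hx0, hne⟩
    have hB : ∀ t : ℝ,
        ((b₁ t + (b₂ t - b₁ t) * chiC ((Complex.I * (starRingEnd ℂ) (y t)) ^ 2) : ℝ) : ℂ)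
          = ((b₁ t + (b₂ t - b₁ t) * chiC (y t ^ 2) : ℝ) : ℂ) := by
      intro t; rw [chiC_conj_sq]
    refine ⟨?_, ?_, ?_, ?_, ?_, ?_, ?_, ?_⟩
    · exact continuousOn_const.mul (RCLike.continuous_conj.comp_continuousOn hy)
    · exact continuousOn_const.mul (RCLike.continuous_conj.comp_continuousOn hg)
    · have : (fun t => ((b₁ t + (b₂ t - b₁ t) *
          chiC ((Complex.I * (starRingEnd ℂ) (y t)) ^ 2) : ℝ) : ℂ)
            * (Complex.I * (starRingEnd ℂ) (y t)))
          = fun t => Complex.I * (starRingEnd ℂ)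
              (((b₁ t + (b₂ t - b₁ t) * chiC (y t ^ 2) : ℝ) : ℂ) * y t) := by
        funext t
        rw [hB t, map_mul, Complex.conj_ofReal]
        ring
      rw [this]
      have hc : MeasureTheory.IntegrableOn
          (fun t => (starRingEnd ℂ) (((b₁ t + (b₂ t - b₁ t) * chiC (y t ^ 2) : ℝ) : ℂ) * y t))
          (Set.Icc a₁ a₂) :=
        (Complex.conjCLE : ℂ →L[ℝ] ℂ).integrable_comp hint
      exact hc.const_mul _
    · intro x hx
      have h1 := heq1 x hx
      simp only []
      rw [h1, map_add, mul_add]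
      congr 1
      rw [← intervalIntegral_conj, ← intervalIntegral.integral_const_mul]
    · intro x hx
      have h2 := heq2 x hx
      simp only []
      have hInt : (∫ t in a₁..x, -((-(starRingEnd ℂ) ω) ^ 2) *
            ((b₁ t + (b₂ t - b₁ t) * chiC ((Complex.I * (starRingEnd ℂ) (y t)) ^ 2) : ℝ) : ℂ)
            * (Complex.I * (starRingEnd ℂ) (y t)))
          = Complex.I * (starRingEnd ℂ)
            (∫ t in a₁..x, -(ω ^ 2) * ((b₁ t + (b₂ t - b₁ t) * chiC (y t ^ 2) : ℝ) : ℂ) * y t) := by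
        rw [← intervalIntegral_conj, ← intervalIntegral.integral_const_mul]
        apply intervalIntegral.integral_congr
        intro t _
        dsimp only
        rw [hB t, map_mul, map_mul, map_neg, map_pow, Complex.conj_ofReal]
        ring
      rw [hInt, h2, map_add, mul_add]
    · simp only []
      rw [hbc1]
      simp only [map_mul, map_neg, Complex.conj_I, Complex.conj_ofReal]
      ring
    · simp only []
      have h2 := congrArg (fun z => Complex.I * (starRingEnd ℂ) z) hbc2
      simp only [map_mul, Complex.conj_I, Complex.conj_ofReal] at h2
      calc (μ₂ : ℂ) * (Complex.I * (starRingEnd ℂ) (g a₂))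
          = Complex.I * ((μ₂ : ℂ) * (starRingEnd ℂ) (g a₂)) := by ring
        _ = Complex.I * ((starRingEnd ℂ) ((μ₂:ℂ) * g a₂)) := by rw [map_mul, Complex.conj_ofReal]
        _ = Complex.I * (-(starRingEnd ℂ) ω) * (Complex.I * (starRingEnd ℂ) (y a₂)) := by
            rw [hbc2]; simp only [map_mul, Complex.conj_I]; ring
    · exact ⟨x0, hx0, by simp [Complex.I_ne_zero, hne]⟩
  exact ⟨main, fun ω ⟨y, g, h⟩ => ⟨_, _, main ω y g h⟩⟩
end
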